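/- arXiv:2404.04954 — 6 statements merged into one kernel-verified Lean document; each statement's English description precedes it below -/
import Mathlib

section
/- For a Banach lattice E, the set aLwc(E) of almost L-weakly compact operators on E is a norm-closed right ideal in the algebra L(E) of bounded operators: it is a closed subspace, and if T ∈ aLwc(E) and S ∈ L(E) then T∘S ∈ aLwc(E). -/
set_option maxHeartbeats 1000000


open Filter Topology

section Defs

/-- A pairwise disjoint sequence in a lattice-ordered group. -/
def DisjSeq {E : Type*} [Lattice E] [AddCommGroup E] (x : ℕ → E) : Prop :=
  ∀ m n : ℕ, m ≠ n → |x m| ⊓ |x n| = 0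

/-- The solid hull of a set. -/
def SolidHull {E : Type*} [NormedAddCommGroup E] [Lattice E] [HasSolidNorm E] [IsOrderedAddMonoid E] (A : Set E) : Set E :=
  {y | ∃ a ∈ A, |y| ≤ |a|}

/-- An L-weakly compact (Lwc) set: bounded, and every disjoint sequence in its
solid hull is norm null. -/
def IsLwcSet {E : Type*} [NormedAddCommGroup E] [Lattice E] [HasSolidNorm E] [IsOrderedAddMonoid E] (A : Set E) : Prop :=
  Bornology.IsBounded A ∧
    ∀ x : ℕ → E, (∀ n, x n ∈ SolidHull A) → DisjSeq x →
      Tendsto (fun n => ‖x n‖) atTop (𝓝 0)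

/-- A relatively weakly compact subset of a normed space. -/
def RelWeaklyCompact {X : Type*} [NormedAddCommGroup X] [NormedSpace ℝ X] (A : Set X) : Prop :=
  IsCompact (closure ((toWeakSpace ℝ X) '' A))

/-- Weak convergence of a sequence in a normed space. -/
def WeakTendsto {X : Type*} [NormedAddCommGroup X] [NormedSpace ℝ X] (x : ℕ → X) (a : X) : Prop :=
  ∀ φ : X →L[ℝ] ℝ, Tendsto (fun n => φ (x n)) atTop (𝓝 (φ a))

/-- A norm-bounded sequence. -/
def BddSeq {X : Type*} [NormedAddCommGroup X] (x : ℕ → X) : Prop :=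
  ∃ M : ℝ, ∀ n, ‖x n‖ ≤ M

/-- Almost L-weakly compact operator: maps relatively weakly compact sets onto Lwc sets. -/
def IsALwc {X F : Type*} [NormedAddCommGroup X] [NormedSpace ℝ X]
    [NormedAddCommGroup F] [Lattice F] [HasSolidNorm F] [IsOrderedAddMonoid F] [NormedSpace ℝ F] (T : X →L[ℝ] F) : Prop :=
  ∀ A : Set X, RelWeaklyCompact A → IsLwcSet (T '' A)

/-- M-weakly compact operator. -/
def IsMwc {E Y : Type*} [NormedAddCommGroup E] [Lattice E] [HasSolidNorm E] [IsOrderedAddMonoid E] [NormedSpace ℝ E]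
    [NormedAddCommGroup Y] [NormedSpace ℝ Y] (T : E →L[ℝ] Y) : Prop :=
  ∀ x : ℕ → E, DisjSeq x → BddSeq x → Tendsto (fun n => ‖T (x n)‖) atTop (𝓝 0)

/-- Almost M-weakly compact operator. -/
def IsAMwc {E Y : Type*} [NormedAddCommGroup E] [Lattice E] [HasSolidNorm E] [IsOrderedAddMonoid E] [NormedSpace ℝ E]
    [NormedAddCommGroup Y] [NormedSpace ℝ Y] (T : E →L[ℝ] Y) : Prop :=
  ∀ (f : ℕ → (Y →L[ℝ] ℝ)) (g : Y →L[ℝ] ℝ), WeakTendsto f g →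
    ∀ x : ℕ → E, DisjSeq x → BddSeq x →
      Tendsto (fun n => f n (T (x n))) atTop (𝓝 0)

/-- Order continuous norm (F = Fᵃ): every disjoint sequence in an order interval
[0, y] is norm null. -/
def HasOCN (F : Type*) [NormedAddCommGroup F] [Lattice F] [HasSolidNorm F] [IsOrderedAddMonoid F] : Prop :=
  ∀ y : F, 0 ≤ y → ∀ x : ℕ → F, (∀ n, x n ∈ Set.Icc (0 : F) y) → DisjSeq x →
    Tendsto (fun n => ‖x n‖) atTop (𝓝 0)

/-- Semi-compact operator. -/
def IsSemiCompact {E F : Type*} [NormedAddCommGroup E] [Lattice E] [HasSolidNorm E] [IsOrderedAddMonoid E] [NormedSpace ℝ E]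
    [NormedAddCommGroup F] [Lattice F] [HasSolidNorm F] [IsOrderedAddMonoid F] [NormedSpace ℝ F] (S : E →L[ℝ] F) : Prop :=
  ∀ ε : ℝ, 0 < ε → ∃ u : F, 0 ≤ u ∧
    ∀ x ∈ Metric.closedBall (0 : E) 1, ∃ w ∈ Set.Icc (-u) u, ‖S x - w‖ ≤ ε

/-- A positive functional on a Banach lattice. -/
def PosFunc {F : Type*} [NormedAddCommGroup F] [Lattice F] [HasSolidNorm F] [IsOrderedAddMonoid F] [NormedSpace ℝ F]
    (f : F →L[ℝ] ℝ) : Prop :=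
  ∀ y : F, 0 ≤ y → 0 ≤ f y

/-- The value of the modulus |f| of a functional at y (meaningful for 0 ≤ y). -/
noncomputable def absDual {F : Type*} [NormedAddCommGroup F] [Lattice F] [HasSolidNorm F] [IsOrderedAddMonoid F] [NormedSpace ℝ F]
    (f : F →L[ℝ] ℝ) (y : F) : ℝ :=
  sSup ((fun z => f z) '' {z : F | |z| ≤ y})

/-- Disjointness of two functionals: (|f| ⊓ |g|)(y) = 0 for all y ≥ 0, via the
Riesz–Kantorovich formula. -/
def DualDisjoint {F : Type*} [NormedAddCommGroup F] [Lattice F] [HasSolidNorm F] [IsOrderedAddMonoid F] [NormedSpace ℝ F]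
    (f g : F →L[ℝ] ℝ) : Prop :=
  ∀ y : F, 0 ≤ y →
    sInf {r : ℝ | ∃ z : F, 0 ≤ z ∧ z ≤ y ∧ r = absDual f z + absDual g (y - z)} = 0

/-- A pairwise disjoint sequence of functionals. -/
def DualDisjSeq {F : Type*} [NormedAddCommGroup F] [Lattice F] [HasSolidNorm F] [IsOrderedAddMonoid F] [NormedSpace ℝ F]
    (f : ℕ → (F →L[ℝ] ℝ)) : Prop :=
  ∀ m n : ℕ, m ≠ n → DualDisjoint (f m) (f n)

/-- A weak* null sequence of functionals. -/
def WeakStarNull {F : Type*} [NormedAddCommGroup F] [NormedSpace ℝ F]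
    (f : ℕ → (F →L[ℝ] ℝ)) : Prop :=
  ∀ y : F, Tendsto (fun n => f n y) atTop (𝓝 0)

/-- Almost limited operator: ‖T* fₙ‖ → 0 for every disjoint weak* null (fₙ) in F*. -/
def IsAlmostLimited {X F : Type*} [NormedAddCommGroup X] [NormedSpace ℝ X]
    [NormedAddCommGroup F] [Lattice F] [HasSolidNorm F] [IsOrderedAddMonoid F] [NormedSpace ℝ F] (T : X →L[ℝ] F) : Prop :=
  ∀ f : ℕ → (F →L[ℝ] ℝ), DualDisjSeq f → WeakStarNull f →
    Tendsto (fun n => ‖(f n).comp T‖) atTop (𝓝 0)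

/-- The canonical order on the dual: f ≤ g iff f y ≤ g y for all y ≥ 0. -/
def DualLE {F : Type*} [NormedAddCommGroup F] [Lattice F] [HasSolidNorm F] [IsOrderedAddMonoid F] [NormedSpace ℝ F]
    (f g : F →L[ℝ] ℝ) : Prop :=
  ∀ y : F, 0 ≤ y → f y ≤ g y

/-- The dual E* is a KB-space: every increasing norm-bounded sequence of positive
functionals is norm convergent. -/
def DualKB (E : Type*) [NormedAddCommGroup E] [Lattice E] [HasSolidNorm E] [IsOrderedAddMonoid E] [NormedSpace ℝ E] : Prop :=
  ∀ f : ℕ → (E →L[ℝ] ℝ), (∀ n, PosFunc (f n)) →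
    (∀ m n : ℕ, m ≤ n → DualLE (f m) (f n)) → (∃ M : ℝ, ∀ n, ‖f n‖ ≤ M) →
      ∃ g : E →L[ℝ] ℝ, Tendsto (fun n => ‖f n - g‖) atTop (𝓝 0)

/-- Positive operator. -/
def PosOp {E F : Type*} [NormedAddCommGroup E] [Lattice E] [HasSolidNorm E] [IsOrderedAddMonoid E] [NormedSpace ℝ E]
    [NormedAddCommGroup F] [Lattice F] [HasSolidNorm F] [IsOrderedAddMonoid F] [NormedSpace ℝ F] (T : E →L[ℝ] F) : Prop :=
  ∀ x : E, 0 ≤ x → 0 ≤ T x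

/-- Order bounded operator: maps order intervals into order intervals. -/
def OrderBoundedOp {E F : Type*} [NormedAddCommGroup E] [Lattice E] [HasSolidNorm E] [IsOrderedAddMonoid E] [NormedSpace ℝ E]
    [NormedAddCommGroup F] [Lattice F] [HasSolidNorm F] [IsOrderedAddMonoid F] [NormedSpace ℝ F] (T : E →L[ℝ] F) : Prop :=
  ∀ a b : E, ∃ c d : F, T '' Set.Icc a b ⊆ Set.Icc c d

/-- Order L-weakly compact operator: maps order bounded sets onto Lwc sets. -/
def IsOLwc {E F : Type*} [NormedAddCommGroup E] [Lattice E] [HasSolidNorm E] [IsOrderedAddMonoid E] [NormedSpace ℝ E]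
    [NormedAddCommGroup F] [Lattice F] [HasSolidNorm F] [IsOrderedAddMonoid F] [NormedSpace ℝ F] (T : E →L[ℝ] F) : Prop :=
  ∀ a b : E, IsLwcSet (T '' Set.Icc a b)

/-- Order M-weakly compact operator. -/
def IsOMwc {E F : Type*} [NormedAddCommGroup E] [Lattice E] [HasSolidNorm E] [IsOrderedAddMonoid E] [NormedSpace ℝ E]
    [NormedAddCommGroup F] [Lattice F] [HasSolidNorm F] [IsOrderedAddMonoid F] [NormedSpace ℝ F] (T : E →L[ℝ] F) : Prop :=
  ∀ f : ℕ → (F →L[ℝ] ℝ),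
    (∃ g h : F →L[ℝ] ℝ, ∀ n, DualLE g (f n) ∧ DualLE (f n) h) →
    ∀ x : ℕ → E, DisjSeq x → BddSeq x →
      Tendsto (fun n => f n (T (x n))) atTop (𝓝 0)

/-- Dunford–Pettis operator. -/
def IsDP {X Y : Type*} [NormedAddCommGroup X] [NormedSpace ℝ X]
    [NormedAddCommGroup Y] [NormedSpace ℝ Y] (T : X →L[ℝ] Y) : Prop :=
  ∀ x : ℕ → X, WeakTendsto x 0 → Tendsto (fun n => ‖T (x n)‖) atTop (𝓝 0)

/-- Weakly sequentially continuous lattice operations. -/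
def WSCLatticeOps (F : Type*) [NormedAddCommGroup F] [Lattice F] [HasSolidNorm F] [IsOrderedAddMonoid F] [NormedSpace ℝ F] : Prop :=
  ∀ x : ℕ → F, WeakTendsto x 0 → WeakTendsto (fun n => |x n|) 0

/-- Limitedly M-weakly compact operator: T xₙ → 0 weakly for each disjoint bounded (xₙ). -/
def IsLMwc {E Y : Type*} [NormedAddCommGroup E] [Lattice E] [HasSolidNorm E] [IsOrderedAddMonoid E] [NormedSpace ℝ E]
    [NormedAddCommGroup Y] [NormedSpace ℝ Y] (T : E →L[ℝ] Y) : Prop :=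
  ∀ x : ℕ → E, DisjSeq x → BddSeq x → WeakTendsto (fun n => T (x n)) 0

end Defs


section Aux

variable {E : Type*} [Lattice E] [AddCommGroup E] [CovariantClass E E (· + ·) (· ≤ ·)]

/-- Riesz-type decomposition with truncation: both parts dominated by `|x|`. -/
theorem exists_decomp (x u v : E) (hu : 0 ≤ u) (hv : 0 ≤ v) (hx : |x| ≤ u + v) :
    ∃ y z : E, x = y + z ∧ |y| ≤ u ∧ |z| ≤ v ∧ |y| ≤ |x| ∧ |z| ≤ |x| := by
  set y : E := (x ⊓ u) ⊔ (-u) with hy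
  refine ⟨y, x - y, by abel, ?_, ?_, ?_, ?_⟩
  · exact abs_le'.2 ⟨sup_le inf_le_right ((neg_nonpos.2 hu).trans hu),
      by rw [hy, neg_sup, neg_neg, neg_inf]; exact inf_le_right⟩
  · refine abs_le'.2 ⟨?_, ?_⟩
    · have h1 : x - y ≤ x - (x ⊓ u) := sub_le_sub_left le_sup_left x
      have h2 : x - (x ⊓ u) = (x - x) ⊔ (x - u) := sub_inf x u x
      have h3 : x - u ≤ v := sub_le_iff_le_add.2 (by
        calc x ≤ |x| := le_abs_self x
        _ ≤ u + v := hx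
        _ = v + u := add_comm u v)
      calc x - y ≤ (x - x) ⊔ (x - u) := h2 ▸ h1
        _ ≤ 0 ⊔ v := by rw [sub_self]; exact sup_le_sup_left h3 0
        _ = v := sup_eq_right.2 hv
    · have h1 : y ≤ x ⊔ (-u) := sup_le_sup_right inf_le_left _
      have h2 : -(x - y) ≤ (x ⊔ (-u)) - x := by
        rw [neg_sub]; exact sub_le_sub_right h1 x
      have h3 : (x ⊔ (-u)) - x = (x - x) ⊔ (-u - x) := sup_sub x (-u) x
      have h4 : -u - x ≤ v := by
        have h5 : -x ≤ u + v := (neg_le_abs x).trans hx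
        have h6 := sub_le_sub_right h5 u
        calc -u - x = -x - u := by abel
          _ ≤ u + v - u := h6
          _ = v := by abel
      calc -(x - y) ≤ (x - x) ⊔ (-u - x) := h3 ▸ h2
        _ ≤ 0 ⊔ v := by rw [sub_self]; exact sup_le_sup_left h4 0
        _ = v := sup_eq_right.2 hv
  · refine abs_le'.2 ⟨sup_le (inf_le_left.trans (le_abs_self x))
      ((neg_nonpos.2 hu).trans (abs_nonneg x)), ?_⟩
    rw [hy, neg_sup, neg_neg, neg_inf]
    exact inf_le_left.trans (sup_le (neg_le_abs x) ((neg_nonpos.2 hu).trans (abs_nonneg x)))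
  · refine abs_le'.2 ⟨?_, ?_⟩
    · have h1 : x - y ≤ x - (x ⊓ u) := sub_le_sub_left le_sup_left x
      have h2 : x - (x ⊓ u) = (x - x) ⊔ (x - u) := sub_inf x u x
      calc x - y ≤ (x - x) ⊔ (x - u) := h2 ▸ h1
        _ ≤ 0 ⊔ |x| := by
            rw [sub_self]
            exact sup_le_sup_left ((sub_le_self x hu).trans (le_abs_self x)) 0
        _ = |x| := sup_eq_right.2 (abs_nonneg x)
    · have h1 : y ≤ x ⊔ (-u) := sup_le_sup_right inf_le_left _
      have h2 : -(x - y) ≤ (x ⊔ (-u)) - x := by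
        rw [neg_sub]; exact sub_le_sub_right h1 x
      have h3 : (x ⊔ (-u)) - x = (x - x) ⊔ (-u - x) := sup_sub x (-u) x
      calc -(x - y) ≤ (x - x) ⊔ (-u - x) := h3 ▸ h2
        _ ≤ 0 ⊔ |x| := by
            rw [sub_self]
            refine sup_le_sup_left (le_trans ?_ (neg_le_abs x)) 0
            calc -u - x ≤ 0 - x := sub_le_sub_right (neg_nonpos.2 hu) x
              _ = -x := by abel
        _ = |x| := sup_eq_right.2 (abs_nonneg x)

end Aux

section WCAux

variable {X Y : Type*} [NormedAddCommGroup X] [NormedSpace ℝ X]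
  [NormedAddCommGroup Y] [NormedSpace ℝ Y]

instance weakSpace_t2 : T2Space (WeakSpace ℝ X) := by
  refine (WeakBilin.isEmbedding ?_).t2Space
  intro a b hab
  by_contra hne
  obtain ⟨f, hf⟩ := SeparatingDual.exists_ne_zero (R := ℝ) (sub_ne_zero.2 hne)
  have h : (topDualPairing ℝ X).flip a f = (topDualPairing ℝ X).flip b f := by rw [hab]
  simp only [LinearMap.flip_apply, topDualPairing_apply] at h
  exact hf (by rw [map_sub, h, sub_self])

theorem relWC_image (f : X →L[ℝ] Y) {A : Set X} (hA : RelWeaklyCompact A) :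
    RelWeaklyCompact (f '' A) := by
  have hK : IsCompact ((WeakSpace.map f) '' closure ((toWeakSpace ℝ X) '' A)) :=
    hA.image (WeakSpace.map f).continuous
  have him : (toWeakSpace ℝ Y) '' (f '' A) =
      (WeakSpace.map f) '' ((toWeakSpace ℝ X) '' A) := by
    simp only [Set.image_image]; rfl
  refine IsCompact.of_isClosed_subset hK isClosed_closure ?_
  rw [him]
  exact closure_minimal (Set.image_mono subset_closure) hK.isClosed

theorem relWC_bounded {A : Set X} (hA : RelWeaklyCompact A) : Bornology.IsBounded A := by
  rw [Metric.isBounded_iff_subset_closedBall 0]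
  set K := closure ((toWeakSpace ℝ X) '' A) with hK
  have hptwise : ∀ φ : X →L[ℝ] ℝ, ∃ C : ℝ, ∀ k : K,
      ‖NormedSpace.inclusionInDoubleDual ℝ X
        ((toWeakSpace ℝ X).symm (k : WeakSpace ℝ X)) φ‖ ≤ C := by
    intro φ
    have hcont : Continuous fun w : WeakSpace ℝ X => φ ((toWeakSpace ℝ X).symm w) :=
      WeakBilin.eval_continuous ((topDualPairing ℝ X).flip) φ
    have hcomp : IsCompact ((fun w : WeakSpace ℝ X => φ ((toWeakSpace ℝ X).symm w)) '' K) :=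
      hA.image hcont
    obtain ⟨C, hC⟩ := hcomp.isBounded.exists_norm_le
    exact ⟨C, fun k => by
      simpa [NormedSpace.dual_def, NormedSpace.inclusionInDoubleDual] using
        hC _ (Set.mem_image_of_mem _ k.2)⟩
  obtain ⟨C', hC'⟩ := banach_steinhaus
    (g := fun k : K => NormedSpace.inclusionInDoubleDual ℝ X
      ((toWeakSpace ℝ X).symm (k : WeakSpace ℝ X)))
    (fun φ => hptwise φ)
  refine ⟨C', fun a ha => ?_⟩
  have hmem : (toWeakSpace ℝ X a : WeakSpace ℝ X) ∈ K :=
    subset_closure (Set.mem_image_of_mem _ ha)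
  have h := hC' ⟨_, hmem⟩
  rw [mem_closedBall_zero_iff]
  calc ‖a‖ = ‖NormedSpace.inclusionInDoubleDualLi ℝ (E := X) a‖ :=
        ((NormedSpace.inclusionInDoubleDualLi ℝ (E := X)).norm_map a).symm
    _ = ‖NormedSpace.inclusionInDoubleDual ℝ X
          ((toWeakSpace ℝ X).symm (toWeakSpace ℝ X a))‖ := by
        simp [NormedSpace.inclusionInDoubleDualLi]
    _ ≤ C' := h

theorem bounded_image (T : X →L[ℝ] Y) {A : Set X} (hA : Bornology.IsBounded A) :
    Bornology.IsBounded (T '' A) := by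
  obtain ⟨R, hR⟩ := hA.exists_norm_le
  rw [isBounded_iff_forall_norm_le]
  refine ⟨‖T‖ * R, ?_⟩
  rintro y ⟨a, ha, rfl⟩
  exact (T.le_opNorm a).trans (mul_le_mul_of_nonneg_left (hR a ha) (norm_nonneg T))

end WCAux

theorem disj_dom {E : Type*} [NormedAddCommGroup E] [Lattice E] [HasSolidNorm E] [IsOrderedAddMonoid E] {x z : ℕ → E}
    (h : ∀ n, |z n| ≤ |x n|) (hx : DisjSeq x) : DisjSeq z := fun m n hmn =>
  le_antisymm ((inf_le_inf (h m) (h n)).trans_eq (hx m n hmn))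
    (le_inf (abs_nonneg _) (abs_nonneg _))

/-- aLwc(E) is a norm-closed right ideal (hence a subalgebra) of L(E). -/
theorem stmt_5 {E : Type*} [NormedAddCommGroup E] [Lattice E] [HasSolidNorm E] [IsOrderedAddMonoid E] [NormedSpace ℝ E] [CompleteSpace E] :
    IsClosed {T : E →L[ℝ] E | IsALwc T} ∧
    (∀ T S : E →L[ℝ] E, IsALwc T → IsALwc S → IsALwc (T + S)) ∧
    (∀ (c : ℝ) (T : E →L[ℝ] E), IsALwc T → IsALwc (c • T)) ∧
    (∀ T S : E →L[ℝ] E, IsALwc T → IsALwc (T.comp S)) := by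
  refine ⟨?_, ?_, ?_, ?_⟩
  · -- closedness
    refine isClosed_of_closure_subset ?_
    intro T hTcl A hA
    have hAb := relWC_bounded hA
    obtain ⟨R, hR⟩ := hAb.exists_norm_le
    set R1 : ℝ := max R 1 with hR1def
    have hR1 : 0 < R1 := lt_of_lt_of_le one_pos (le_max_right R 1)
    refine ⟨bounded_image T hAb, ?_⟩
    intro x hx hd
    choose b hb hxb using hx
    choose a ha hba using hb
    rw [Metric.tendsto_atTop]
    intro ε hε
    obtain ⟨T', hT'mem, hT'close⟩ := Metric.mem_closure_iff.1 hTcl (ε / (4 * R1))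
      (by positivity)
    have hdec : ∀ n, ∃ y z : E, x n = y + z ∧ |y| ≤ |T' (a n)| ∧
        |z| ≤ |(T - T') (a n)| ∧ |y| ≤ |x n| ∧ |z| ≤ |x n| := by
      intro n
      refine exists_decomp _ _ _ (abs_nonneg _) (abs_nonneg _) ?_
      have h1 : |x n| ≤ |T (a n)| := by rw [hba n]; exact hxb n
      have h2 : |T (a n)| = |T' (a n) + (T - T') (a n)| := by
        congr 1
        simp only [ContinuousLinearMap.sub_apply]
        abel
      rw [h2] at h1
      exact h1.trans (abs_add_le _ _)
    choose y z hxyz hyle hzle hyx hzx using hdec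
    have hzn : ∀ n, ‖z n‖ ≤ ε / 4 := by
      intro n
      have h1 : ‖z n‖ ≤ ‖(T - T') (a n)‖ :=
        norm_le_norm_of_abs_le_abs (hzle n)
      have h2 : ‖(T - T') (a n)‖ ≤ ‖T - T'‖ * ‖a n‖ := (T - T').le_opNorm _
      have h3 : ‖T - T'‖ < ε / (4 * R1) := by rwa [← dist_eq_norm]
      have h4 : ‖a n‖ ≤ R1 := (hR _ (ha n)).trans (le_max_left R 1)
      calc ‖z n‖ ≤ ‖T - T'‖ * ‖a n‖ := h1.trans h2
        _ ≤ (ε / (4 * R1)) * R1 :=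
            mul_le_mul h3.le h4 (norm_nonneg _) (by positivity)
        _ = ε / 4 := by field_simp
    have hy : Tendsto (fun n => ‖y n‖) atTop (𝓝 0) :=
      (hT'mem A hA).2 y
        (fun n => ⟨T' (a n), Set.mem_image_of_mem _ (ha n), hyle n⟩)
        (disj_dom hyx hd)
    obtain ⟨N, hN⟩ := (Metric.tendsto_atTop.1 hy) (ε / 4) (by positivity)
    refine ⟨N, fun n hn => ?_⟩
    have h5 : ‖x n‖ ≤ ‖y n‖ + ‖z n‖ := by rw [hxyz n]; exact norm_add_le _ _
    have h6 : ‖y n‖ < ε / 4 := by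
      have := hN n hn
      rwa [Real.dist_eq, sub_zero, abs_of_nonneg (norm_nonneg _)] at this
    rw [Real.dist_eq, sub_zero, abs_of_nonneg (norm_nonneg _)]
    linarith [hzn n]
  · -- sum
    intro T S hT hS A hA
    refine ⟨bounded_image (T + S) (relWC_bounded hA), ?_⟩
    intro x hx hd
    choose b hb hxb using hx
    choose a ha hba using hb
    have hdec : ∀ n, ∃ y z : E, x n = y + z ∧ |y| ≤ |T (a n)| ∧
        |z| ≤ |S (a n)| ∧ |y| ≤ |x n| ∧ |z| ≤ |x n| := by
      intro n
      refine exists_decomp _ _ _ (abs_nonneg _) (abs_nonneg _) ?_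
      have h1 : |x n| ≤ |(T + S) (a n)| := by rw [hba n]; exact hxb n
      have h2 : |(T + S) (a n)| = |T (a n) + S (a n)| := rfl
      rw [h2] at h1
      exact h1.trans (abs_add_le _ _)
    choose y z hxyz hyle hzle hyx hzx using hdec
    have hy : Tendsto (fun n => ‖y n‖) atTop (𝓝 0) :=
      (hT A hA).2 y (fun n => ⟨T (a n), Set.mem_image_of_mem _ (ha n), hyle n⟩)
        (disj_dom hyx hd)
    have hz : Tendsto (fun n => ‖z n‖) atTop (𝓝 0) :=
      (hS A hA).2 z (fun n => ⟨S (a n), Set.mem_image_of_mem _ (ha n), hzle n⟩)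
        (disj_dom hzx hd)
    have hsum : Tendsto (fun n => ‖y n‖ + ‖z n‖) atTop (𝓝 0) := by
      simpa using hy.add hz
    refine squeeze_zero (fun n => norm_nonneg _) (fun n => ?_) hsum
    rw [hxyz n]
    exact norm_add_le _ _
  · -- smul
    intro c T hT A hA
    have h : (c • T) '' A = T '' ((c • ContinuousLinearMap.id ℝ E) '' A) := by
      rw [Set.image_image]
      refine Set.image_congr' (fun a => ?_)
      simp
    rw [h]
    exact hT _ (relWC_image _ hA)
  · -- composition
    intro T S hT A hA
    have h : T.comp S '' A = T '' (S '' A) := by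
      rw [Set.image_image]
      rfl
    rw [h]
    exact hT _ (relWC_image S hA)
end

section
/- For a Banach lattice E, the set aMwc(E) of almost M-weakly compact operators on E is a norm-closed left ideal in L(E): it is a closed subspace, and if T ∈ aMwc(E) and S ∈ L(E) then S∘T ∈ aMwc(E). -/
open Filter Topology

/-- aMwc(E) is a norm-closed left ideal (hence a subalgebra) of L(E). -/
theorem stmt_6 {E : Type*} [NormedAddCommGroup E] [Lattice E] [HasSolidNorm E] [IsOrderedAddMonoid E] [NormedSpace ℝ E] [CompleteSpace E] :
    IsClosed {T : E →L[ℝ] E | IsAMwc T} ∧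
    (∀ T S : E →L[ℝ] E, IsAMwc T → IsAMwc S → IsAMwc (T + S)) ∧
    (∀ (c : ℝ) (T : E →L[ℝ] E), IsAMwc T → IsAMwc (c • T)) ∧
    (∀ T S : E →L[ℝ] E, IsAMwc T → IsAMwc (S.comp T)) := by
  refine ⟨?_, ?_, ?_, ?_⟩
  · -- closedness
    refine isClosed_of_closure_subset ?_
    intro T hT f g hfg x hx hbx
    obtain ⟨M, hM⟩ := hbx
    have hM0 : 0 ≤ M := le_trans (norm_nonneg _) (hM 0)
    -- (f n) is norm bounded by Banach–Steinhaus
    have hpt : ∀ y : E, ∃ C : ℝ, ∀ n, ‖f n y‖ ≤ C := by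
      intro y
      have h1 : Tendsto (fun n => f n y) atTop (𝓝 (g y)) := by
        simpa using hfg (ContinuousLinearMap.apply ℝ ℝ y)
      have h2 := h1.norm.bddAbove_range
      obtain ⟨C, hC⟩ := h2
      exact ⟨C, fun n => hC ⟨n, rfl⟩⟩
    obtain ⟨C, hC⟩ := banach_steinhaus hpt
    have hC0 : 0 ≤ C := le_trans (norm_nonneg _) (hC 0)
    rw [Metric.tendsto_atTop]
    intro ε hε
    have hden : (0:ℝ) < C * M + 1 := by positivity
    have hδ : (0:ℝ) < ε / (2 * (C * M + 1)) := by positivity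
    obtain ⟨T', hT', hTT'⟩ := Metric.mem_closure_iff.mp hT _ hδ
    have h0 := hT' f g hfg x hx ⟨M, hM⟩
    rw [Metric.tendsto_atTop] at h0
    obtain ⟨N, hN⟩ := h0 (ε / 2) (by positivity)
    refine ⟨N, fun n hn => ?_⟩
    have key : ‖f n (T (x n)) - f n (T' (x n))‖ ≤ C * (ε / (2 * (C * M + 1))) * M := by
      have : f n (T (x n)) - f n (T' (x n)) = f n ((T - T') (x n)) := by simp
      rw [this]
      calc ‖f n ((T - T') (x n))‖ ≤ ‖f n‖ * ‖(T - T') (x n)‖ :=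
            (f n).le_opNorm _
        _ ≤ ‖f n‖ * (‖T - T'‖ * ‖x n‖) := by
            exact mul_le_mul_of_nonneg_left ((T - T').le_opNorm _) (norm_nonneg _)
        _ ≤ C * (ε / (2 * (C * M + 1)) * M) := by
            apply mul_le_mul (hC n) ?_ (by positivity) hC0
            exact mul_le_mul (le_of_lt (by simpa [dist_eq_norm] using hTT')) (hM n)
              (norm_nonneg _) (le_of_lt hδ)
        _ = C * (ε / (2 * (C * M + 1))) * M := by ring
    have key2 : C * (ε / (2 * (C * M + 1))) * M < ε / 2 := by
      calc C * (ε / (2 * (C * M + 1))) * M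
          = (C * M) * (ε / (2 * (C * M + 1))) := by ring
        _ < (C * M + 1) * (ε / (2 * (C * M + 1))) := by
            exact mul_lt_mul_of_pos_right (by linarith) hδ
        _ = ε / 2 := by field_simp
    have := hN n hn
    rw [Real.dist_eq, sub_zero] at this ⊢
    calc |f n (T (x n))| ≤ |f n (T (x n)) - f n (T' (x n))| + |f n (T' (x n))| := by
          have := abs_sub_abs_le_abs_sub (f n (T (x n))) (f n (T' (x n)))
          have h := abs_add_le (f n (T (x n)) - f n (T' (x n))) (f n (T' (x n)))
          simpa using h.trans_eq' (by ring_nf)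
      _ < ε / 2 + ε / 2 :=
          add_lt_add (lt_of_le_of_lt (by simpa [Real.norm_eq_abs] using key) key2) this
      _ = ε := by ring
  · intro T S hT hS f g hfg x hx hbx
    have h1 := hT f g hfg x hx hbx
    have h2 := hS f g hfg x hx hbx
    have := h1.add h2
    simpa using this
  · intro c T hT f g hfg x hx hbx
    have h1 := (hT f g hfg x hx hbx).const_mul c
    simpa [mul_comm] using h1
  · intro T S hT f g hfg x hx hbx
    have hfg' : WeakTendsto (fun n => (f n).comp S) (g.comp S) := by
      intro φ
      have := hfg (φ.comp ((ContinuousLinearMap.compL ℝ E E ℝ).flip S))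
      simpa using this
    have := hT (fun n => (f n).comp S) (g.comp S) hfg' x hx hbx
    simpa using this
end

section
/- Let E, F be Banach lattices such that E* is a KB-space, F is Dedekind complete, and F* has the Schur property. Then for every order bounded operator T : E → F, the modulus |T| is almost M-weakly compact. -/
open Filter Topology

namespace Stmt7Aux

variable {E : Type*} [NormedAddCommGroup E] [Lattice E] [HasSolidNorm E] [IsOrderedAddMonoid E] [NormedSpace ℝ E]

lemma disj_add' {a b c : E} (ha : 0 ≤ a) (hb : 0 ≤ b) (hc : 0 ≤ c)
    (hac : a ⊓ c = 0) (hbc : b ⊓ c = 0) : (a + b) ⊓ c = 0 := by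
  set d := (a + b) ⊓ c with hd
  have hd0 : 0 ≤ d := le_inf (add_nonneg ha hb) hc
  have hdc : d ≤ c := inf_le_right
  have hdab : d ≤ a + b := inf_le_left
  have h1 : d ⊓ b ≤ 0 := by
    have : d ⊓ b ≤ b ⊓ c := le_inf inf_le_right (le_trans inf_le_left hdc)
    rwa [hbc] at this
  have h2 : d ⊔ b - b ≤ 0 := by
    have ha' : d ⊔ b - b ≤ a := by
      rw [sub_le_iff_le_add]
      exact sup_le hdab (le_add_of_nonneg_left ha)
    have hc' : d ⊔ b - b ≤ c := by
      rw [sub_le_iff_le_add]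
      exact sup_le (hdc.trans (le_add_of_nonneg_right hb)) (le_add_of_nonneg_left hc)
    have : d ⊔ b - b ≤ a ⊓ c := le_inf ha' hc'
    rwa [hac] at this
  have key : d = d ⊓ b + (d ⊔ b - b) := by
    have := inf_add_sup d b
    rw [← add_sub_assoc, this, add_sub_cancel_right]
  have : d ≤ 0 := by
    rw [key]
    calc d ⊓ b + (d ⊔ b - b) ≤ 0 + 0 := add_le_add h1 h2
    _ = 0 := add_zero 0
  exact le_antisymm this hd0

lemma disj_nsmul {a b : E} (ha : 0 ≤ a) (hb : 0 ≤ b) (hab : a ⊓ b = 0) (k : ℕ) :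
    (k • a) ⊓ b = 0 := by
  induction k with
  | zero => rw [zero_smul]; exact inf_eq_left.mpr hb
  | succ k ih =>
    rw [succ_nsmul]
    exact disj_add' (nsmul_nonneg ha k) ha hb ih hab

lemma disj_nsmul₂ {a b : E} (ha : 0 ≤ a) (hb : 0 ≤ b) (hab : a ⊓ b = 0) (k l : ℕ) :
    (k • a) ⊓ (l • b) = 0 := by
  have h1 : (k • a) ⊓ b = 0 := disj_nsmul ha hb hab k
  have h2 : (l • b) ⊓ (k • a) = 0 :=
    disj_nsmul hb (nsmul_nonneg ha k) (by rwa [inf_comm]) l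
  rwa [inf_comm]

lemma sum_inf_zero {c : E} (hc : 0 ≤ c) (z : ℕ → E) (h0 : ∀ n, 0 ≤ z n)
    (N : ℕ) (hd : ∀ n, n < N → z n ⊓ c = 0) :
    (∑ n ∈ Finset.range N, z n) ⊓ c = 0 := by
  induction N with
  | zero => simpa using inf_eq_left.mpr hc
  | succ N ih =>
    rw [Finset.sum_range_succ]
    exact disj_add' (Finset.sum_nonneg fun n _ => h0 n) (h0 N) hc
      (ih fun n hn => hd n (hn.trans (Nat.lt_succ_self N)))
      (hd N (Nat.lt_succ_self N))

lemma sum_disj_le {x : E} (hx : 0 ≤ x) (z : ℕ → E) (h0 : ∀ n, 0 ≤ z n)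
    (hle : ∀ n, z n ≤ x) (hd : ∀ m n, m ≠ n → z m ⊓ z n = 0) (N : ℕ) :
    ∑ n ∈ Finset.range N, z n ≤ x := by
  induction N with
  | zero => simpa using hx
  | succ N ih =>
    rw [Finset.sum_range_succ]
    have hinf : (∑ n ∈ Finset.range N, z n) ⊓ z N = 0 :=
      sum_inf_zero (h0 N) z h0 N fun n hn => hd n N hn.ne
    have := inf_add_sup (∑ n ∈ Finset.range N, z n) (z N)
    rw [hinf, zero_add] at this
    rw [← this]
    exact sup_le ih (hle N)

lemma abs_sum_le' (z : ℕ → E) (N : ℕ) :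
    |∑ n ∈ Finset.range N, z n| ≤ ∑ n ∈ Finset.range N, |z n| := by
  induction N with
  | zero => simp
  | succ N ih =>
    rw [Finset.sum_range_succ, Finset.sum_range_succ]
    exact (abs_add_le _ _).trans (add_le_add_left ih _)

lemma negabs (z : E) : -|z| ≤ z := neg_le.mp (neg_le_abs z)

lemma posPart_le_abs' (a : E) : a⁺ ≤ |a| := by
  rw [posPart_def]
  exact sup_le (le_abs_self a) (abs_nonneg a)

lemma negPart_le_abs' (a : E) : a⁻ ≤ |a| := by
  rw [negPart_def]
  exact sup_le (neg_le_abs a) (abs_nonneg a)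

/-- Riesz-type decomposition with band control. -/
lemma riesz {x y z : E} (hx : 0 ≤ x) (hy : 0 ≤ y) (hz : |z| ≤ x + y) :
    ∃ z₁ : E, |z₁| ≤ x ⊓ |z| ∧ |z - z₁| ≤ y := by
  set z₁ := (z ⊔ -x) ⊓ x with hz₁
  have hax : z₁ ≤ x := inf_le_right
  have hbx : -x ≤ z₁ := le_inf le_sup_right (neg_le_self hx)
  have hcz : z₁ ≤ |z| :=
    inf_le_left.trans (sup_le (le_abs_self z) ((neg_nonpos.mpr hx).trans (abs_nonneg z)))
  have hdz : -|z| ≤ z₁ :=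
    le_inf ((negabs z).trans le_sup_left) ((neg_nonpos.mpr (abs_nonneg z)).trans hx)
  have hzxy : z ≤ x + y := (le_abs_self z).trans hz
  have hzxy' : -(x + y) ≤ z := (neg_le_neg hz).trans (negabs z)
  refine ⟨z₁, abs_le'.mpr ⟨le_inf hax hcz, le_inf (neg_le.mp hbx) (neg_le.mp hdz)⟩,
    abs_le'.mpr ⟨?_, ?_⟩⟩
  · have h1 : z ⊓ x ≤ z₁ := inf_le_inf_right x le_sup_left
    have h2 : z - z₁ ≤ z - z ⊓ x := sub_le_sub_left h1 z
    have h3 : z - z ⊓ x = 0 ⊔ (z - x) := by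
      rw [sub_eq_add_neg, neg_inf, add_sup, add_neg_cancel, ← sub_eq_add_neg]
    have h4 : (0 : E) ⊔ (z - x) ≤ y := by
      refine sup_le hy ?_
      rw [sub_le_iff_le_add, add_comm]
      exact hzxy
    rw [h3] at h2
    exact h2.trans h4
  · have h1 : z₁ ≤ z + y := by
      refine inf_le_left.trans (sup_le (le_add_of_nonneg_right hy) ?_)
      have h5 : -x - y ≤ z := by
        have h6 := hzxy'; rw [neg_add] at h6; rwa [sub_eq_add_neg]
      rwa [sub_le_iff_le_add] at h5
    have h2 : z - (z + y) ≤ z - z₁ := sub_le_sub_left h1 z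
    have h3 : z - (z + y) = -y := by abel
    rw [h3] at h2
    have := neg_le_neg h2
    rwa [neg_neg] at this

noncomputable def psiSet (h : E →L[ℝ] ℝ) (u x : E) : Set ℝ :=
  {r : ℝ | ∃ (k : ℕ) (z : E), |z| ≤ x ⊓ (k • u) ∧ r = h z}

noncomputable def psi (h : E →L[ℝ] ℝ) (u x : E) : ℝ := sSup (psiSet h u x)

section PsiLemmas

variable {h : E →L[ℝ] ℝ} {u x y : E}

lemma psiSet_zero_mem (hu : 0 ≤ u) (hx : 0 ≤ x) : (0 : ℝ) ∈ psiSet h u x :=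
  ⟨1, 0, by simpa using le_inf hx (by simpa using hu), by simp⟩

lemma psiSet_nonempty (hu : 0 ≤ u) (hx : 0 ≤ x) : (psiSet h u x).Nonempty :=
  ⟨0, psiSet_zero_mem hu hx⟩

lemma psiSet_bound (hx : 0 ≤ x) : ∀ r ∈ psiSet h u x, r ≤ ‖h‖ * ‖x‖ := by
  rintro r ⟨k, z, hz, rfl⟩
  have h1 : |z| ≤ |x| := by rw [abs_of_nonneg hx]; exact hz.trans inf_le_left
  have h2 : ‖z‖ ≤ ‖x‖ := norm_le_norm_of_abs_le_abs h1
  calc h z ≤ |h z| := le_abs_self _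
  _ = ‖h z‖ := (Real.norm_eq_abs _).symm
  _ ≤ ‖h‖ * ‖z‖ := h.le_opNorm z
  _ ≤ ‖h‖ * ‖x‖ := mul_le_mul_of_nonneg_left h2 (norm_nonneg h)

lemma psiSet_bdd (hx : 0 ≤ x) : BddAbove (psiSet h u x) :=
  ⟨‖h‖ * ‖x‖, psiSet_bound hx⟩

lemma le_psi (hx : 0 ≤ x) {k : ℕ} {z : E} (hz : |z| ≤ x ⊓ (k • u)) :
    h z ≤ psi h u x := le_csSup (psiSet_bdd hx) ⟨k, z, hz, rfl⟩

lemma psi_nonneg (hu : 0 ≤ u) (hx : 0 ≤ x) : 0 ≤ psi h u x :=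
  le_csSup (psiSet_bdd hx) (psiSet_zero_mem hu hx)

lemma psi_le_norm (hu : 0 ≤ u) (hx : 0 ≤ x) : psi h u x ≤ ‖h‖ * ‖x‖ :=
  csSup_le (psiSet_nonempty hu hx) (psiSet_bound hx)

lemma psiSet_approx (hu : 0 ≤ u) (hx : 0 ≤ x) :
    ∀ δ > (0 : ℝ), ∃ (k : ℕ) (z : E), |z| ≤ x ⊓ (k • u) ∧ psi h u x < h z + δ := by
  intro δ hδ
  obtain ⟨r, hr, hlt⟩ := exists_lt_of_lt_csSup (psiSet_nonempty hu hx)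
    (show psi h u x - δ < psi h u x by linarith)
  obtain ⟨k, z, hz, rfl⟩ := hr
  exact ⟨k, z, hz, by linarith⟩

lemma psi_zero (hu : 0 ≤ u) : psi h u (0 : E) = 0 := by
  refine le_antisymm (csSup_le (psiSet_nonempty hu le_rfl) ?_)
    (psi_nonneg hu le_rfl)
  rintro r ⟨k, z, hz, rfl⟩
  have h1 : |z| ≤ 0 := hz.trans inf_le_left
  have h2 : z = 0 := le_antisymm ((le_abs_self z).trans h1)
    (neg_nonpos.mp ((neg_le_abs z).trans h1))
  simp [h2]

lemma psi_add (hu : 0 ≤ u) (hx : 0 ≤ x) (hy : 0 ≤ y) :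
    psi h u (x + y) = psi h u x + psi h u y := by
  have hxy : 0 ≤ x + y := add_nonneg hx hy
  refine le_antisymm ?_ ?_
  · refine csSup_le (psiSet_nonempty hu hxy) ?_
    rintro r ⟨k, z, hz, rfl⟩
    have hz' : |z| ≤ x + y := hz.trans inf_le_left
    obtain ⟨z₁, hz₁, hz₂⟩ := riesz hx hy hz'
    have hzk : |z| ≤ k • u := hz.trans inf_le_right
    have m1 : h z₁ ≤ psi h u x :=
      le_psi hx (k := k) (le_inf (hz₁.trans inf_le_left)
        ((hz₁.trans inf_le_right).trans hzk))
    have m2 : h (z - z₁) ≤ psi h u y := by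
      refine le_psi hy (k := k + k) (le_inf hz₂ ?_)
      have habs : |z - z₁| ≤ |z| + |z₁| := by
        calc |z - z₁| = |z + -z₁| := by rw [sub_eq_add_neg]
        _ ≤ |z| + |-z₁| := abs_add_le _ _
        _ = |z| + |z₁| := by rw [abs_neg]
      refine habs.trans ?_
      have hz₁k : |z₁| ≤ k • u := (hz₁.trans inf_le_right).trans hzk
      calc |z| + |z₁| ≤ k • u + k • u := add_le_add hzk hz₁k
      _ = (k + k) • u := (add_nsmul u k k).symm
    have hsplit : h z = h z₁ + h (z - z₁) := by
      rw [← map_add]; congr 1; abel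
    rw [hsplit]
    exact add_le_add m1 m2
  · have step : ∀ r ∈ psiSet h u x, ∀ s ∈ psiSet h u y, r + s ≤ psi h u (x + y) := by
      rintro r ⟨k, v, hv, rfl⟩ s ⟨l, w, hw, rfl⟩
      have habs : |v + w| ≤ (x + y) ⊓ ((k + l) • u) := by
        refine le_inf ?_ ?_
        · exact (abs_add_le v w).trans
            (add_le_add (hv.trans inf_le_left) (hw.trans inf_le_left))
        · rw [add_nsmul]
          exact (abs_add_le v w).trans
            (add_le_add (hv.trans inf_le_right) (hw.trans inf_le_right))
      have hvw : h v + h w = h (v + w) := (map_add h v w).symm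
      rw [hvw]
      exact le_psi hxy habs
    have h2 : ∀ r ∈ psiSet h u x, r + psi h u y ≤ psi h u (x + y) := by
      intro r hr
      rw [← le_sub_iff_add_le']
      exact csSup_le (psiSet_nonempty hu hy)
        fun s hs => le_sub_iff_add_le'.mpr (step r hr s hs)
    rw [← le_sub_iff_add_le]
    exact csSup_le (psiSet_nonempty hu hx) fun r hr => le_sub_iff_add_le.mpr (h2 r hr)

end PsiLemmas

lemma exists_Phi (h : E →L[ℝ] ℝ) (u : E) (hu : 0 ≤ u) :
    ∃ Φ : E →L[ℝ] ℝ, ∀ x : E, 0 ≤ x → Φ x = psi h u x := by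
  set p0 : E → ℝ := fun x => psi h u x⁺ - psi h u x⁻ with hp0
  have hp0add : ∀ a b : E, p0 (a + b) = p0 a + p0 b := by
    intro a b
    have e1 : (a⁺ + b⁺) - (a⁻ + b⁻) = (a⁺ - a⁻) + (b⁺ - b⁻) := by abel
    have e2 : (a + b)⁺ - (a + b)⁻ = (a⁺ + b⁺) - (a⁻ + b⁻) := by
      rw [posPart_sub_negPart, e1, posPart_sub_negPart, posPart_sub_negPart]
    have e3 : (a + b)⁺ + (a⁻ + b⁻) = (a⁺ + b⁺) + (a + b)⁻ :=
      sub_eq_sub_iff_add_eq_add.mp e2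
    have key := congrArg (psi h u) e3
    rw [psi_add hu (posPart_nonneg _) (add_nonneg (negPart_nonneg a) (negPart_nonneg b)),
      psi_add hu (negPart_nonneg a) (negPart_nonneg b),
      psi_add hu (add_nonneg (posPart_nonneg a) (posPart_nonneg b)) (negPart_nonneg _),
      psi_add hu (posPart_nonneg a) (posPart_nonneg b)] at key
    simp only [hp0]
    linarith
  set pAdd : E →+ ℝ := AddMonoidHom.mk' p0 hp0add with hpAdd
  have hbound : ∀ x : E, |p0 x| ≤ 2 * ‖h‖ * ‖x‖ := by
    intro x
    have n1 : ‖x⁺‖ ≤ ‖x‖ := norm_le_norm_of_abs_le_abs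
      (by rw [abs_of_nonneg (posPart_nonneg x)]; exact posPart_le_abs' x)
    have n2 : ‖x⁻‖ ≤ ‖x‖ := norm_le_norm_of_abs_le_abs
      (by rw [abs_of_nonneg (negPart_nonneg x)]; exact negPart_le_abs' x)
    have b1 : 0 ≤ psi h u x⁺ := psi_nonneg hu (posPart_nonneg x)
    have b2 : 0 ≤ psi h u x⁻ := psi_nonneg hu (negPart_nonneg x)
    have b3 : psi h u x⁺ ≤ ‖h‖ * ‖x‖ :=
      (psi_le_norm hu (posPart_nonneg x)).trans
        (mul_le_mul_of_nonneg_left n1 (norm_nonneg h))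
    have b4 : psi h u x⁻ ≤ ‖h‖ * ‖x‖ :=
      (psi_le_norm hu (negPart_nonneg x)).trans
        (mul_le_mul_of_nonneg_left n2 (norm_nonneg h))
    rw [abs_le]
    constructor <;> simp only [hp0] <;> nlinarith [norm_nonneg x, norm_nonneg h]
  have hlip : LipschitzWith (Real.toNNReal (2 * ‖h‖)) pAdd := by
    refine LipschitzWith.of_dist_le_mul ?_
    intro a b
    have hsub : pAdd a - pAdd b = p0 (a - b) := (map_sub pAdd a b).symm
    rw [Real.dist_eq, dist_eq_norm, hsub]
    calc |p0 (a - b)| ≤ 2 * ‖h‖ * ‖a - b‖ := hbound _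
    _ ≤ (Real.toNNReal (2 * ‖h‖) : ℝ) * ‖a - b‖ := by
        refine mul_le_mul_of_nonneg_right ?_ (norm_nonneg _)
        rw [Real.coe_toNNReal _ (by positivity)]
  refine ⟨pAdd.toRealLinearMap hlip.continuous, ?_⟩
  intro x hx
  have hrfl : (pAdd.toRealLinearMap hlip.continuous) x = p0 x := rfl
  rw [hrfl]
  simp only [hp0]
  rw [posPart_eq_self.mpr hx, negPart_eq_zero.mpr hx, psi_zero hu, sub_zero]

lemma sum_psi_le (h : E →L[ℝ] ℝ) (y : ℕ → E) (hy0 : ∀ n, 0 ≤ y n)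
    (hyd : ∀ m n, m ≠ n → y m ⊓ y n = 0) {x : E} (hx : 0 ≤ x) (N : ℕ) :
    ∑ n ∈ Finset.range N, psi h (y n) x ≤ ‖h‖ * ‖x‖ := by
  rcases Nat.eq_zero_or_pos N with rfl | hN
  · simp; positivity
  refine le_of_forall_pos_le_add fun δ hδ => ?_
  have hδ' : (0:ℝ) < δ / N := by positivity
  have hch : ∀ n : ℕ, ∃ (k : ℕ) (z : E), |z| ≤ x ⊓ (k • y n) ∧
      psi h (y n) x < h z + δ / N :=
    fun n => psiSet_approx (hy0 n) hx (δ / N) hδ'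
  choose k z hz hlt using hch
  have hzd : ∀ m n, m ≠ n → |z m| ⊓ |z n| = 0 := by
    intro m n hmn
    refine le_antisymm ?_ (le_inf (abs_nonneg _) (abs_nonneg _))
    calc |z m| ⊓ |z n| ≤ (k m • y m) ⊓ (k n • y n) :=
          inf_le_inf ((hz m).trans inf_le_right) ((hz n).trans inf_le_right)
    _ = 0 := disj_nsmul₂ (hy0 m) (hy0 n) (hyd m n hmn) _ _
  have hsum : |∑ n ∈ Finset.range N, z n| ≤ x := by
    refine (abs_sum_le' z N).trans ?_
    exact sum_disj_le hx (fun n => |z n|) (fun n => abs_nonneg _)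
      (fun n => (hz n).trans inf_le_left) hzd N
  have hnorm : ‖∑ n ∈ Finset.range N, z n‖ ≤ ‖x‖ :=
    norm_le_norm_of_abs_le_abs (by rw [abs_of_nonneg hx]; exact hsum)
  calc ∑ n ∈ Finset.range N, psi h (y n) x
      ≤ ∑ n ∈ Finset.range N, (h (z n) + δ / N) :=
        Finset.sum_le_sum fun n _ => (hlt n).le
  _ = h (∑ n ∈ Finset.range N, z n) + N * (δ / N) := by
      rw [Finset.sum_add_distrib, map_sum, Finset.sum_const, Finset.card_range,
        nsmul_eq_mul]
  _ = h (∑ n ∈ Finset.range N, z n) + δ := by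
      rw [mul_div_cancel₀]
      exact_mod_cast hN.ne'
  _ ≤ ‖h‖ * ‖x‖ + δ := by
      have hb : h (∑ n ∈ Finset.range N, z n) ≤ ‖h‖ * ‖∑ n ∈ Finset.range N, z n‖ := by
        calc h _ ≤ |h _| := le_abs_self _
        _ = ‖h _‖ := (Real.norm_eq_abs _).symm
        _ ≤ ‖h‖ * ‖_‖ := h.le_opNorm _
      have := hb.trans (mul_le_mul_of_nonneg_left hnorm (norm_nonneg h))
      linarith

lemma core (hE : DualKB E) (h : E →L[ℝ] ℝ) (y : ℕ → E)
    (hy0 : ∀ n, 0 ≤ y n) (hyd : ∀ m n, m ≠ n → y m ⊓ y n = 0)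
    (M : ℝ) (hM : ∀ n, ‖y n‖ ≤ M) (ε : ℝ) (hε : 0 < ε)
    (hlow : ∀ n, ε ≤ |h (y n)|) : False := by
  choose Φ hΦ using fun n => exists_Phi h (y n) (hy0 n)
  set F : ℕ → (E →L[ℝ] ℝ) := fun N => ∑ n ∈ Finset.range N, Φ n with hF
  have hFx : ∀ N x, F N x = ∑ n ∈ Finset.range N, Φ n x := by
    intro N x
    simp [hF, ContinuousLinearMap.sum_apply]
  have hFpos : ∀ N, PosFunc (F N) := by
    intro N x hx
    rw [hFx]
    exact Finset.sum_nonneg fun n _ => by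
      rw [hΦ n x hx]; exact psi_nonneg (hy0 n) hx
  have hFmono : ∀ m n, m ≤ n → DualLE (F m) (F n) := by
    intro m n hmn x hx
    rw [hFx, hFx]
    refine Finset.sum_le_sum_of_subset_of_nonneg
      (Finset.range_subset_range.mpr hmn) fun i _ _ => ?_
    rw [hΦ i x hx]; exact psi_nonneg (hy0 i) hx
  have hFbd : ∃ C : ℝ, ∀ N, ‖F N‖ ≤ C := by
    refine ⟨2 * ‖h‖, fun N => ContinuousLinearMap.opNorm_le_bound _ (by positivity) fun x => ?_⟩
    have hx1 : F N x = F N x⁺ - F N x⁻ := by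
      rw [← map_sub]; congr 1; exact (posPart_sub_negPart x).symm
    have hp : F N x⁺ ≤ ‖h‖ * ‖x⁺‖ := by
      rw [hFx]
      have heq : ∀ n ∈ Finset.range N, Φ n x⁺ = psi h (y n) x⁺ :=
        fun n _ => hΦ n x⁺ (posPart_nonneg x)
      rw [Finset.sum_congr rfl heq]
      exact sum_psi_le h y hy0 hyd (posPart_nonneg x) N
    have hm : F N x⁻ ≤ ‖h‖ * ‖x⁻‖ := by
      rw [hFx]
      have heq : ∀ n ∈ Finset.range N, Φ n x⁻ = psi h (y n) x⁻ :=
        fun n _ => hΦ n x⁻ (negPart_nonneg x)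
      rw [Finset.sum_congr rfl heq]
      exact sum_psi_le h y hy0 hyd (negPart_nonneg x) N
    have hp0 : 0 ≤ F N x⁺ := hFpos N _ (posPart_nonneg x)
    have hm0 : 0 ≤ F N x⁻ := hFpos N _ (negPart_nonneg x)
    have n1 : ‖x⁺‖ ≤ ‖x‖ := norm_le_norm_of_abs_le_abs
      (by rw [abs_of_nonneg (posPart_nonneg x)]; exact posPart_le_abs' x)
    have n2 : ‖x⁻‖ ≤ ‖x‖ := norm_le_norm_of_abs_le_abs
      (by rw [abs_of_nonneg (negPart_nonneg x)]; exact negPart_le_abs' x)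
    rw [hx1, Real.norm_eq_abs, abs_le]
    constructor
    · nlinarith [norm_nonneg h, norm_nonneg x]
    · nlinarith [norm_nonneg h, norm_nonneg x]
  obtain ⟨g, hg⟩ := hE F hFpos hFmono hFbd
  have hΦeq : ∀ N, Φ N = F (N + 1) - F N := by
    intro N
    rw [hF]
    simp [Finset.sum_range_succ]
  have hΦnorm : Tendsto (fun N => ‖Φ N‖) atTop (𝓝 0) := by
    have hb : ∀ N, ‖Φ N‖ ≤ ‖F (N + 1) - g‖ + ‖F N - g‖ := by
      intro N
      rw [hΦeq N]
      calc ‖F (N + 1) - F N‖ = ‖(F (N + 1) - g) - (F N - g)‖ := by congr 1; abel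
      _ ≤ ‖F (N + 1) - g‖ + ‖F N - g‖ := norm_sub_le _ _
    have hlim : Tendsto (fun N => ‖F (N + 1) - g‖ + ‖F N - g‖) atTop (𝓝 0) := by
      have h1 : Tendsto (fun N => ‖F (N + 1) - g‖) atTop (𝓝 0) :=
        hg.comp (tendsto_add_atTop_nat 1)
      simpa using h1.add hg
    exact squeeze_zero (fun N => norm_nonneg _) hb hlim
  have key : ∀ N, ε ≤ ‖Φ N‖ * M := by
    intro N
    have habs : |h (y N)| ≤ psi h (y N) (y N) := by
      have hmem : |y N| ≤ y N ⊓ ((1 : ℕ) • y N) := by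
        rw [one_nsmul, inf_idem, abs_of_nonneg (hy0 N)]
      have h1 : h (y N) ≤ psi h (y N) (y N) := le_psi (hy0 N) hmem
      have h2 : -h (y N) ≤ psi h (y N) (y N) := by
        have hneg : |(-(y N))| ≤ y N ⊓ ((1 : ℕ) • y N) := by rwa [abs_neg]
        have := le_psi (h := h) (hy0 N) hneg
        rwa [map_neg] at this
      exact abs_le'.mpr ⟨h1, h2⟩
    calc ε ≤ |h (y N)| := hlow N
    _ ≤ psi h (y N) (y N) := habs
    _ = Φ N (y N) := (hΦ N (y N) (hy0 N)).symm
    _ ≤ ‖Φ N (y N)‖ := le_abs_self _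
    _ ≤ ‖Φ N‖ * ‖y N‖ := (Φ N).le_opNorm _
    _ ≤ ‖Φ N‖ * M := mul_le_mul_of_nonneg_left (hM N) (norm_nonneg _)
  have hfin : ε ≤ 0 * M := ge_of_tendsto (hΦnorm.mul_const M) (Eventually.of_forall key)
  rw [zero_mul] at hfin
  linarith

lemma tendsto_pos (hE : DualKB E) (h : E →L[ℝ] ℝ) (y : ℕ → E)
    (hy0 : ∀ n, 0 ≤ y n) (hyd : ∀ m n, m ≠ n → y m ⊓ y n = 0)
    (M : ℝ) (hM : ∀ n, ‖y n‖ ≤ M) :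
    Tendsto (fun n => h (y n)) atTop (𝓝 0) := by
  by_contra hcon
  rw [Metric.tendsto_atTop] at hcon
  push_neg at hcon
  obtain ⟨ε, hε, hfr⟩ := hcon
  have hfr' : ∀ N : ℕ, ∃ n ≥ N, ε ≤ |h (y n)| := by
    intro N
    obtain ⟨n, hn, hd⟩ := hfr N
    exact ⟨n, hn, by rwa [Real.dist_0_eq_abs] at hd⟩
  obtain ⟨φ, hφmono, hφ⟩ :=
    Filter.extraction_of_frequently_atTop (Filter.frequently_atTop.mpr hfr')
  exact core hE h (fun n => y (φ n)) (fun n => hy0 _)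
    (fun m n hmn => hyd _ _ fun e => hmn (hφmono.injective e))
    M (fun n => hM _) ε hε (fun n => hφ n)

lemma tendsto_gen (hE : DualKB E) (h : E →L[ℝ] ℝ) (x : ℕ → E)
    (hd : DisjSeq x) (hb : BddSeq x) :
    Tendsto (fun n => h (x n)) atTop (𝓝 0) := by
  obtain ⟨M, hM⟩ := hb
  have hdp : ∀ m n : ℕ, m ≠ n → (x m)⁺ ⊓ (x n)⁺ = 0 := by
    intro m n hmn
    refine le_antisymm ?_ (le_inf (posPart_nonneg _) (posPart_nonneg _))
    calc (x m)⁺ ⊓ (x n)⁺ ≤ |x m| ⊓ |x n| :=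
          inf_le_inf (posPart_le_abs' _) (posPart_le_abs' _)
    _ = 0 := hd m n hmn
  have hdm : ∀ m n : ℕ, m ≠ n → (x m)⁻ ⊓ (x n)⁻ = 0 := by
    intro m n hmn
    refine le_antisymm ?_ (le_inf (negPart_nonneg _) (negPart_nonneg _))
    calc (x m)⁻ ⊓ (x n)⁻ ≤ |x m| ⊓ |x n| :=
          inf_le_inf (negPart_le_abs' _) (negPart_le_abs' _)
    _ = 0 := hd m n hmn
  have hbp : ∀ n, ‖(x n)⁺‖ ≤ M := fun n =>
    (norm_le_norm_of_abs_le_abs (by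
      rw [abs_of_nonneg (posPart_nonneg _)]; exact posPart_le_abs' _)).trans (hM n)
  have hbm : ∀ n, ‖(x n)⁻‖ ≤ M := fun n =>
    (norm_le_norm_of_abs_le_abs (by
      rw [abs_of_nonneg (negPart_nonneg _)]; exact negPart_le_abs' _)).trans (hM n)
  have h1 := tendsto_pos hE h (fun n => (x n)⁺) (fun n => posPart_nonneg _) hdp M hbp
  have h2 := tendsto_pos hE h (fun n => (x n)⁻) (fun n => negPart_nonneg _) hdm M hbm
  have heq : (fun n => h (x n)) = fun n => h ((x n)⁺) - h ((x n)⁻) := by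
    funext n
    rw [← map_sub, posPart_sub_negPart]
  rw [heq]
  simpa using h1.sub h2

end Stmt7Aux

/-- If E* is a KB-space, F is Dedekind complete and F* has the Schur property,
then the modulus |T| of any order bounded operator T : E → F is almost
M-weakly compact. -/
theorem stmt_7 {E F : Type*}
    [NormedAddCommGroup E] [Lattice E] [HasSolidNorm E] [IsOrderedAddMonoid E] [NormedSpace ℝ E] [CompleteSpace E]
    [NormedAddCommGroup F] [Lattice F] [HasSolidNorm F] [IsOrderedAddMonoid F] [NormedSpace ℝ F] [CompleteSpace F]
    (hE : DualKB E)
    (hDed : ∀ s : Set F, s.Nonempty → BddAbove s → ∃ a : F, IsLUB s a)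
    (hSchur : ∀ f : ℕ → (F →L[ℝ] ℝ), WeakTendsto f 0 →
      Tendsto (fun n => ‖f n‖) atTop (𝓝 0))
    (T : E →L[ℝ] F) (hT : OrderBoundedOp T)
    (S : E →L[ℝ] F)
    (hS : ∀ x : E, 0 ≤ x → IsLUB (T '' {z : E | |z| ≤ x}) (S x)) :
    IsAMwc S := by
  intro f g hfg x hxd hxb
  obtain ⟨M, hM⟩ := hxb
  have hSM : ∀ n, ‖S (x n)‖ ≤ ‖S‖ * M := fun n =>
    (S.le_opNorm _).trans (mul_le_mul_of_nonneg_left (hM n) (norm_nonneg S))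
  have hweak : WeakTendsto (fun n => f n - g) 0 := by
    intro φ
    have := (hfg φ).sub_const (φ g)
    simpa [map_sub, sub_self] using this
  have hnorm : Tendsto (fun n => ‖f n - g‖) atTop (𝓝 0) := hSchur _ hweak
  have h2 : Tendsto (fun n => (g.comp S) (x n)) atTop (𝓝 0) :=
    Stmt7Aux.tendsto_gen hE (g.comp S) x hxd ⟨M, hM⟩
  have h1 : Tendsto (fun n => (f n - g) (S (x n))) atTop (𝓝 0) := by
    refine squeeze_zero_norm (a := fun n => ‖f n - g‖ * (‖S‖ * M))
      (fun n => ((f n - g).le_opNorm (S (x n))).trans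
        (mul_le_mul_of_nonneg_left (hSM n) (norm_nonneg _)))
      (by simpa using hnorm.mul_const (‖S‖ * M))
  have heq : (fun n => f n (S (x n))) =
      fun n => (f n - g) (S (x n)) + (g.comp S) (x n) := by
    funext n
    simp [ContinuousLinearMap.sub_apply]
  rw [heq]
  simpa using h1.add h2
end

section
/- If E is an AM-space, then every bounded operator T : E → Y into a Banach space Y is almost M-weakly compact. -/
open Filter Topology

section AMAux
variable {E : Type*} [NormedAddCommGroup E] [Lattice E] [HasSolidNorm E] [IsOrderedAddMonoid E]

lemma am_inf_add {a b c : E} (ha : 0 ≤ a) (hb : 0 ≤ b) (hc : 0 ≤ c)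
    (h1 : a ⊓ c = 0) (h2 : b ⊓ c = 0) : (a + b) ⊓ c = 0 := by
  refine le_antisymm ?_ (le_inf (add_nonneg ha hb) hc)
  have key : a ⊓ c + b ⊓ c = ((a + b) ⊓ (a + c)) ⊓ ((c + b) ⊓ (c + c)) := by
    rw [inf_add, add_inf, add_inf]
  have h3 : (a + b) ⊓ c ≤ a ⊓ c + b ⊓ c := by
    rw [key]
    refine le_inf (le_inf inf_le_left ?_) (le_inf ?_ ?_)
    · exact le_trans inf_le_right (le_add_of_nonneg_left ha)
    · exact le_trans inf_le_right (le_add_of_nonneg_right hb)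
    · exact le_trans inf_le_right (le_add_of_nonneg_right hc)
  rwa [h1, h2, add_zero] at h3

lemma am_abs_sum (s : Finset ℕ) (f : ℕ → E) : |∑ k ∈ s, f k| ≤ ∑ k ∈ s, |f k| := by
  classical
  induction s using Finset.induction_on with
  | empty => simp
  | insert _ _ h ih =>
    rw [Finset.sum_insert h, Finset.sum_insert h]
    exact (abs_add_le _ _).trans (add_le_add le_rfl ih)

/-- DisjSeq inline to avoid dependence; use hypothesis form. -/
lemma am_disj_sum (x : ℕ → E) (hd : ∀ m n : ℕ, m ≠ n → |x m| ⊓ |x n| = 0) :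
    ∀ (s : Finset ℕ) (a : ℕ), a ∉ s → (∑ k ∈ s, |x k|) ⊓ |x a| = 0 := by
  classical
  intro s
  induction s using Finset.induction_on with
  | empty => intro a _; simpa using inf_eq_right.mpr (abs_nonneg (x a))
  | @insert b t hb ih =>
    intro a ha
    rw [Finset.sum_insert hb]
    refine am_inf_add (abs_nonneg _) (Finset.sum_nonneg fun k _ => abs_nonneg _)
      (abs_nonneg _) (hd b a (by intro h; exact ha (by simp [h]))) (ih a (fun h => ha (by simp [h])))

lemma am_norm_sum (hE : ∀ x y : E, 0 ≤ x → 0 ≤ y → ‖x ⊔ y‖ = max ‖x‖ ‖y‖)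
    (x : ℕ → E) (hd : ∀ m n : ℕ, m ≠ n → |x m| ⊓ |x n| = 0) (M : ℝ) (hM0 : 0 ≤ M)
    (hM : ∀ n, ‖x n‖ ≤ M) : ∀ s : Finset ℕ, ‖∑ k ∈ s, |x k|‖ ≤ M := by
  classical
  intro s
  induction s using Finset.induction_on with
  | empty => simpa using hM0
  | @insert b t hb ih =>
    rw [Finset.sum_insert hb]
    have hinf : |x b| ⊓ (∑ k ∈ t, |x k|) = 0 := by
      rw [inf_comm]; exact am_disj_sum x hd t b hb
    have hsum : |x b| + ∑ k ∈ t, |x k| = |x b| ⊔ ∑ k ∈ t, |x k| := by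
      have h := inf_add_sup (|x b|) (∑ k ∈ t, |x k|)
      rw [hinf, zero_add] at h
      exact h.symm
    rw [hsum, hE _ _ (abs_nonneg _) (Finset.sum_nonneg fun k _ => abs_nonneg _)]
    rw [norm_abs_eq_norm]
    exact max_le (hM b) ih

variable {Y : Type*} [NormedSpace ℝ E] [NormedAddCommGroup Y] [NormedSpace ℝ Y]

lemma am_key (hE : ∀ x y : E, 0 ≤ x → 0 ≤ y → ‖x ⊔ y‖ = max ‖x‖ ‖y‖)
    (T : E →L[ℝ] Y) (x : ℕ → E) (hd : ∀ m n : ℕ, m ≠ n → |x m| ⊓ |x n| = 0)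
    (M : ℝ) (hM0 : 0 ≤ M) (hM : ∀ n, ‖x n‖ ≤ M) (h : Y →L[ℝ] ℝ) (s : Finset ℕ) :
    ∑ k ∈ s, |h (T (x k))| ≤ ‖T‖ * M * ‖h‖ := by
  classical
  set ε : ℕ → ℝ := fun k => if 0 ≤ h (T (x k)) then 1 else -1 with hεdef
  set z : E := ∑ k ∈ s, ε k • x k with hz
  have habs : |z| ≤ ∑ k ∈ s, |x k| := by
    refine (am_abs_sum s _).trans ?_
    refine Finset.sum_le_sum fun k _ => ?_
    by_cases hk : 0 ≤ h (T (x k))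
    · have he : ε k = 1 := by simp [hεdef, hk]
      rw [he, one_smul]
    · have he : ε k = -1 := by simp [hεdef, hk]
      rw [he, neg_one_smul, abs_neg]
  have hnorm : ‖z‖ ≤ M := by
    have h1 : ‖∑ k ∈ s, |x k|‖ ≤ M := am_norm_sum hE x hd M hM0 hM s
    have h2 : ‖z‖ ≤ ‖∑ k ∈ s, |x k|‖ := by
      refine HasSolidNorm.solid ?_
      have h3 : abs (∑ k ∈ s, |x k|) = ∑ k ∈ s, |x k| :=
        abs_of_nonneg (Finset.sum_nonneg fun k _ => abs_nonneg _)
      rw [h3]; exact habs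
    exact h2.trans h1
  have heval : h (T z) = ∑ k ∈ s, |h (T (x k))| := by
    rw [hz, map_sum, map_sum]
    refine Finset.sum_congr rfl fun k _ => ?_
    rw [map_smul, map_smul]
    by_cases hk : 0 ≤ h (T (x k))
    · have he : ε k = 1 := by simp [hεdef, hk]
      rw [he, one_smul, abs_of_nonneg hk]
    · have he : ε k = -1 := by simp [hεdef, hk]
      rw [he, neg_one_smul, abs_of_neg (lt_of_not_ge hk)]
  calc ∑ k ∈ s, |h (T (x k))| = h (T z) := heval.symm
    _ ≤ |h (T z)| := le_abs_self _
    _ ≤ ‖h‖ * ‖T z‖ := by simpa [Real.norm_eq_abs] using h.le_opNorm (T z)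
    _ ≤ ‖h‖ * (‖T‖ * ‖z‖) := by
        have := T.le_opNorm z
        gcongr
    _ ≤ ‖h‖ * (‖T‖ * M) := by gcongr
    _ = ‖T‖ * M * ‖h‖ := by ring

lemma am_psi (y : ℕ → Y) (C : ℝ)
    (hsum : ∀ h : Y →L[ℝ] ℝ, Summable fun k => |h (y k)|)
    (hbdd : ∀ h : Y →L[ℝ] ℝ, (∑' k, |h (y k)|) ≤ C * ‖h‖)
    (θ : ℕ → ℝ) (hθ : ∀ k, |θ k| ≤ 1) :
    ∃ ψ : (Y →L[ℝ] ℝ) →L[ℝ] ℝ, ∀ h, ψ h = ∑' k, θ k * h (y k) := by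
  have hsum' : ∀ h : Y →L[ℝ] ℝ, Summable fun k => θ k * h (y k) := by
    intro h
    apply Summable.of_abs
    refine Summable.of_nonneg_of_le (fun k => abs_nonneg _) (fun k => ?_) (hsum h)
    rw [abs_mul]
    exact mul_le_of_le_one_left (abs_nonneg _) (hθ k)
  refine ⟨LinearMap.mkContinuous
    { toFun := fun h => ∑' k, θ k * h (y k)
      map_add' := ?_
      map_smul' := ?_ } C ?_, fun h => rfl⟩
  · intro h g
    simp only [ContinuousLinearMap.add_apply]
    rw [← Summable.tsum_add (hsum' h) (hsum' g)]
    congr 1; funext k; ring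
  · intro c h
    simp only [ContinuousLinearMap.coe_smul', Pi.smul_apply, RingHom.id_apply, smul_eq_mul]
    rw [← tsum_mul_left]
    congr 1; funext k; ring
  · intro h
    simp only [LinearMap.coe_mk, AddHom.coe_mk, Real.norm_eq_abs]
    have h1 : abs (∑' k, θ k * h (y k)) ≤ ∑' k, |θ k * h (y k)| := by
      have := norm_tsum_le_tsum_norm (f := fun k => θ k * h (y k))
        (by simpa only [Real.norm_eq_abs] using (hsum' h).abs)
      simpa only [Real.norm_eq_abs] using this
    have h2 : (∑' k, |θ k * h (y k)|) ≤ ∑' k, |h (y k)| := by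
      refine Summable.tsum_le_tsum (fun k => ?_) ((hsum' h).abs) (hsum h)
      rw [abs_mul]
      exact mul_le_of_le_one_left (abs_nonneg _) (hθ k)
    exact h1.trans (h2.trans (hbdd h))

end AMAux

/-- If E is an AM-space, then every bounded operator T : E → Y is almost
M-weakly compact. -/
theorem stmt_9 {E Y : Type*}
    [NormedAddCommGroup E] [Lattice E] [HasSolidNorm E] [IsOrderedAddMonoid E] [NormedSpace ℝ E] [CompleteSpace E]
    [NormedAddCommGroup Y] [NormedSpace ℝ Y] [CompleteSpace Y]
    (hE : ∀ x y : E, 0 ≤ x → 0 ≤ y → ‖x ⊔ y‖ = max ‖x‖ ‖y‖)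
    (T : E →L[ℝ] Y) :
    IsAMwc T := by
  classical
  intro f g hfg x hdisj hbdd
  obtain ⟨M0, hM0⟩ := hbdd
  set M : ℝ := max M0 0 with hMdef
  have hM : ∀ n, ‖x n‖ ≤ M := fun n => le_trans (hM0 n) (le_max_left _ _)
  have hMnn : (0:ℝ) ≤ M := le_max_right _ _
  set y : ℕ → Y := fun n => T (x n) with hy
  have key : ∀ (h : Y →L[ℝ] ℝ) (s : Finset ℕ), ∑ k ∈ s, |h (y k)| ≤ ‖T‖ * M * ‖h‖ :=
    fun h s => am_key hE T x hdisj M hMnn hM h s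
  have hsum : ∀ h : Y →L[ℝ] ℝ, Summable fun k => |h (y k)| := fun h =>
    summable_of_sum_range_le (fun k => abs_nonneg _) (fun n => key h (Finset.range n))
  have htsum : ∀ h : Y →L[ℝ] ℝ, (∑' k, |h (y k)|) ≤ ‖T‖ * M * ‖h‖ := fun h =>
    Real.tsum_le_of_sum_range_le (fun k => abs_nonneg _) (fun n => key h (Finset.range n))
  -- g (y n) → 0
  have hgy : Tendsto (fun n => g (y n)) atTop (𝓝 0) := by
    have h1 : Tendsto (fun n => |g (y n)|) atTop (𝓝 0) := (hsum g).tendsto_atTop_zero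
    refine squeeze_zero_norm (fun n => ?_) h1
    simp [Real.norm_eq_abs]
  -- weak null
  have hweak : ∀ ψ : (Y →L[ℝ] ℝ) →L[ℝ] ℝ,
      Tendsto (fun n => ψ (f n - g)) atTop (𝓝 0) := by
    intro ψ
    have h1 := (hfg ψ).sub_const (ψ g)
    simp only [sub_self] at h1
    refine h1.congr fun n => ?_
    rw [map_sub]
  set F : ℕ → Y →L[ℝ] ℝ := fun n => f n - g with hF
  have hcol : ∀ k, Tendsto (fun n => F n (y k)) atTop (𝓝 0) := fun k => by
    simpa [hF] using hweak (ContinuousLinearMap.apply ℝ ℝ (y k))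
  have main : Tendsto (fun n => F n (y n)) atTop (𝓝 0) := by
    by_contra hcon
    obtain ⟨ε, hε, hfreq⟩ : ∃ ε > 0, ∀ N : ℕ, ∃ n > N, ε ≤ |F n (y n)| := by
      rw [Metric.tendsto_atTop] at hcon
      push_neg at hcon
      obtain ⟨ε, hε, hcon⟩ := hcon
      refine ⟨ε, hε, fun N => ?_⟩
      obtain ⟨n, hn, h⟩ := hcon (N + 1)
      exact ⟨n, by omega, by simpa [Real.dist_eq] using h⟩
    obtain ⟨φ, hφmono, hφ⟩ := Nat.exists_strictMono_subsequence hfreq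
    -- step existence
    have hstep : ∀ c : ℕ, ∃ i Cc : ℕ, c < φ i ∧ φ i ≤ Cc ∧
        (∑ k ∈ Finset.range (c+1), |F (φ i) (y k)|) < ε/8 ∧
        (∑' k : {k : ℕ // k ∉ Finset.range (Cc+1)}, |F (φ i) (y (k:ℕ))|) ≤ ε/8 := by
      intro c
      have hcols : Tendsto (fun n => ∑ k ∈ Finset.range (c+1), |F n (y k)|) atTop (𝓝 0) := by
        have h1 : Tendsto (fun n => ∑ k ∈ Finset.range (c+1), |F n (y k)|) atTop
            (𝓝 (∑ k ∈ Finset.range (c+1), (0:ℝ))) :=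
          tendsto_finset_sum _ (fun k _ => by
            simpa [Real.norm_eq_abs] using ((hcol k).norm))
        simpa using h1
      obtain ⟨N, hN⟩ := Metric.tendsto_atTop.1 hcols (ε/8) (by positivity)
      set i := max N (c+1) with hi
      have hiN : N ≤ φ i := le_trans (le_max_left _ _) hφmono.le_apply
      have hic : c < φ i := lt_of_lt_of_le (lt_of_lt_of_le (Nat.lt_succ_self c)
        (le_max_right _ _)) hφmono.le_apply
      have hpart := (hsum (F (φ i))).hasSum.tendsto_sum_nat
      obtain ⟨N2, hN2⟩ := Metric.tendsto_atTop.1 hpart (ε/8) (by positivity)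
      refine ⟨i, max (φ i) N2, hic, le_max_left _ _, ?_, ?_⟩
      · have h2 := hN (φ i) hiN
        rw [Real.dist_eq, sub_zero,
          abs_of_nonneg (Finset.sum_nonneg fun k _ => abs_nonneg _)] at h2
        exact h2
      · set Cc := max (φ i) N2 with hCc
        have hsplit := Summable.sum_add_tsum_subtype_compl (hsum (F (φ i))) (Finset.range (Cc+1))
        have hmono : (∑ k ∈ Finset.range N2, |F (φ i) (y k)|)
            ≤ ∑ k ∈ Finset.range (Cc+1), |F (φ i) (y k)| :=
          Finset.sum_le_sum_of_subset_of_nonneg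
            (Finset.range_subset_range.2 (by omega)) (fun k _ _ => abs_nonneg _)
        have h2 := hN2 N2 le_rfl
        rw [Real.dist_eq] at h2
        have h3 : (∑ k ∈ Finset.range N2, |F (φ i) (y k)|)
            ≤ ∑' k, |F (φ i) (y k)| := Summable.sum_le_tsum _ (fun k _ => abs_nonneg _) (hsum (F (φ i)))
        have h4 := abs_lt.1 h2
        linarith [hsplit.symm, h4.1, h4.2]
    choose I CC hI1 hI2 hI3 hI4 using hstep
    set c : ℕ → ℕ := fun j => Nat.rec 0 (fun _ cj => CC cj) j with hcdef
    have hcs : ∀ j, c (j+1) = CC (c j) := fun j => rfl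
    set p : ℕ → ℕ := fun j => I (c j) with hpdef
    have hblock1 : ∀ j, c j < φ (p j) := fun j => hI1 (c j)
    have hblock2 : ∀ j, φ (p j) ≤ c (j+1) := fun j => by rw [hcs]; exact hI2 (c j)
    have hcmono : StrictMono c :=
      strictMono_nat_of_lt_succ fun j => lt_of_lt_of_le (hblock1 j) (hblock2 j)
    have hcge : ∀ j, j ≤ c j := fun j => hcmono.le_apply
    have hex : ∀ k : ℕ, ∃ j, k ≤ c (j+1) := fun k =>
      ⟨k, le_trans (hcge k) (le_of_lt (hcmono (Nat.lt_succ_self k)))⟩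
    set J : ℕ → ℕ := fun k => Nat.find (hex k) with hJdef
    have hJspec : ∀ j k, c j < k → k ≤ c (j+1) → J k = j := by
      intro j k h1 h2
      rw [hJdef, Nat.find_eq_iff]
      refine ⟨h2, fun j' hj' => ?_⟩
      have h3 : c (j'+1) ≤ c j := hcmono.monotone (Nat.succ_le_of_lt hj')
      intro hk
      exact absurd (hk.trans h3) (not_le.2 h1)
    set θ : ℕ → ℝ := fun k => if 0 ≤ F (φ (p (J k))) (y k) then 1 else -1 with hθdef
    have hθ1 : ∀ k, |θ k| ≤ 1 := by
      intro k; rw [hθdef]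
      by_cases hk : 0 ≤ F (φ (p (J k))) (y k) <;> simp [hk]
    obtain ⟨ψ, hψ⟩ := am_psi y (‖T‖ * M) hsum htsum θ hθ1
    have hsum2 : ∀ h : Y →L[ℝ] ℝ, Summable fun k => θ k * h (y k) := by
      intro h
      apply Summable.of_abs
      refine Summable.of_nonneg_of_le (fun k => abs_nonneg _) (fun k => ?_) (hsum h)
      rw [abs_mul]
      exact mul_le_of_le_one_left (abs_nonneg _) (hθ1 k)
    -- lower bound
    have hlow : ∀ j, ε - ε/4 ≤ ψ (F (φ (p j))) := by
      intro j
      set h : Y →L[ℝ] ℝ := F (φ (p j)) with hhdef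
      rw [hψ]
      have hsplit := Summable.sum_add_tsum_subtype_compl (hsum2 h) (Finset.range (c (j+1) + 1))
      set A : Finset ℕ := Finset.range (c j + 1) with hA
      set B : Finset ℕ := Finset.Ioc (c j) (c (j+1)) with hB
      have hAB : A ∪ B = Finset.range (c (j+1) + 1) := by
        have hcc : c j < c (j+1) := hcmono (Nat.lt_succ_self j)
        ext k
        simp only [hA, hB, Finset.mem_union, Finset.mem_range, Finset.mem_Ioc]
        omega
      have hABdisj : Disjoint A B := by
        rw [Finset.disjoint_left]
        intro k hk1 hk2
        simp only [hA, Finset.mem_range] at hk1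
        simp only [hB, Finset.mem_Ioc] at hk2
        omega
      have hsumAB : (∑ k ∈ Finset.range (c (j+1) + 1), θ k * h (y k))
          = (∑ k ∈ A, θ k * h (y k)) + ∑ k ∈ B, θ k * h (y k) := by
        rw [← hAB, Finset.sum_union hABdisj]
      -- block part
      have hBeq : ∀ k ∈ B, θ k * h (y k) = |h (y k)| := by
        intro k hk
        simp only [hB, Finset.mem_Ioc] at hk
        have hJk : J k = j := hJspec j k hk.1 hk.2
        rw [hθdef]
        simp only [hJk, ← hhdef]
        by_cases hk2 : 0 ≤ h (y k)
        · rw [if_pos hk2, one_mul, abs_of_nonneg hk2]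
        · rw [if_neg hk2, neg_one_mul, abs_of_neg (lt_of_not_ge hk2)]
      have hdiag : φ (p j) ∈ B := by
        simp only [hB, Finset.mem_Ioc]
        exact ⟨hblock1 j, hblock2 j⟩
      have hBge : ε ≤ ∑ k ∈ B, θ k * h (y k) := by
        rw [Finset.sum_congr rfl hBeq]
        calc ε ≤ |h (y (φ (p j)))| := hφ (p j)
          _ ≤ ∑ k ∈ B, |h (y k)| :=
            Finset.single_le_sum (f := fun k => |h (y k)|) (fun k _ => abs_nonneg _) hdiag
      -- A part
      have hAsmall : |∑ k ∈ A, θ k * h (y k)| ≤ ε/8 := by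
        calc |∑ k ∈ A, θ k * h (y k)| ≤ ∑ k ∈ A, |θ k * h (y k)| :=
              Finset.abs_sum_le_sum_abs _ _
          _ ≤ ∑ k ∈ A, |h (y k)| := by
              refine Finset.sum_le_sum fun k _ => ?_
              rw [abs_mul]
              exact mul_le_of_le_one_left (abs_nonneg _) (hθ1 k)
          _ ≤ ε/8 := le_of_lt (hI3 (c j))
      -- tail part
      have htail : |∑' k : {k : ℕ // k ∉ Finset.range (c (j+1) + 1)}, θ (k:ℕ) * h (y (k:ℕ))| ≤ ε/8 := by
        have hs1 : Summable fun k : {k : ℕ // k ∉ Finset.range (c (j+1) + 1)} => θ (k:ℕ) * h (y (k:ℕ)) :=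
          (hsum2 h).subtype _
        have hs2 : Summable fun k : {k : ℕ // k ∉ Finset.range (c (j+1) + 1)} => |h (y (k:ℕ))| :=
          (hsum h).subtype _
        have h1 := norm_tsum_le_tsum_norm
          (f := fun k : {k : ℕ // k ∉ Finset.range (c (j+1) + 1)} => θ (k:ℕ) * h (y (k:ℕ)))
          (by simpa only [Real.norm_eq_abs] using hs1.abs)
        rw [Real.norm_eq_abs] at h1
        refine h1.trans ?_
        have h2 : (∑' k : {k : ℕ // k ∉ Finset.range (c (j+1) + 1)}, ‖θ (k:ℕ) * h (y (k:ℕ))‖)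
            ≤ ∑' k : {k : ℕ // k ∉ Finset.range (c (j+1) + 1)}, |h (y (k:ℕ))| := by
          refine Summable.tsum_le_tsum (fun k => ?_) (by simpa only [Real.norm_eq_abs] using hs1.abs) hs2
          rw [Real.norm_eq_abs, abs_mul]
          exact mul_le_of_le_one_left (abs_nonneg _) (hθ1 _)
        refine h2.trans ?_
        have h3 := hI4 (c j)
        rw [← hcs] at h3
        exact h3
      have h5 := abs_le.1 hAsmall
      have h6 := abs_le.1 htail
      have h7 : (∑' k, θ k * h (y k))
          = ((∑ k ∈ A, θ k * h (y k)) + ∑ k ∈ B, θ k * h (y k))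
            + ∑' k : {k : ℕ // k ∉ Finset.range (c (j+1) + 1)}, θ (k:ℕ) * h (y (k:ℕ)) := by
        rw [← hsumAB]
        exact hsplit.symm
      rw [h7]
      linarith [h5.1, h6.1, hBge]
    -- contradiction
    have htop : Tendsto (fun j => φ (p j)) atTop atTop := by
      refine tendsto_atTop_mono (fun j => ?_) tendsto_id
      exact le_of_lt (lt_of_le_of_lt (hcge j) (hblock1 j))
    have htend : Tendsto (fun j => ψ (F (φ (p j)))) atTop (𝓝 0) := (hweak ψ).comp htop
    have hfin : ε - ε/4 ≤ 0 := ge_of_tendsto htend (Eventually.of_forall hlow)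
    linarith
  have final := main.add hgy
  rw [add_zero] at final
  refine final.congr fun n => ?_
  simp [hF, hy, ContinuousLinearMap.sub_apply]
end

section
/- Every positive almost L-weakly compact operator T : E → F between Banach lattices is order L-weakly compact: for each x ∈ E₊, the image T[0,x] of the order interval is an Lwc set. -/
open Filter Topology

/-- Singletons are relatively weakly compact. -/
lemma relWeaklyCompact_singleton {X : Type*} [NormedAddCommGroup X] [NormedSpace ℝ X]
    [CompleteSpace X] (x : X) : RelWeaklyCompact ({x} : Set X) := by
  unfold RelWeaklyCompact
  rw [Set.image_singleton]
  have hcl : IsClosed ({toWeakSpace ℝ X x} : Set (WeakSpace ℝ X)) := by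
    have : ({toWeakSpace ℝ X x} : Set (WeakSpace ℝ X)) =
        ⋂ φ : X →L[ℝ] ℝ, (fun w : WeakSpace ℝ X =>
          ((topDualPairing ℝ X).flip w) φ) ⁻¹' {φ x} := by
      ext w
      simp only [Set.mem_singleton_iff, Set.mem_iInter, Set.mem_preimage]
      constructor
      · rintro rfl φ; rfl
      · intro h
        have : ((toWeakSpace ℝ X).symm w) = x :=
          (NormedSpace.eq_iff_forall_dual_eq ℝ).2 fun g => h g
        rw [← this]; rfl
    rw [this]
    exact isClosed_iInter fun φ =>
      IsClosed.preimage (WeakBilin.eval_continuous _ φ) isClosed_singleton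
  rw [hcl.closure_eq]
  exact isCompact_singleton

/-- Every positive almost L-weakly compact operator T : E → F is order L-weakly
compact: the image of each order interval [0, x] is an Lwc set. -/
theorem stmt_16 {E F : Type*}
    [NormedAddCommGroup E] [Lattice E] [HasSolidNorm E] [IsOrderedAddMonoid E] [NormedSpace ℝ E] [CompleteSpace E]
    [NormedAddCommGroup F] [Lattice F] [HasSolidNorm F] [IsOrderedAddMonoid F] [NormedSpace ℝ F] [CompleteSpace F]
    (T : E →L[ℝ] F) (hpos : PosOp T) (hT : IsALwc T) :
    ∀ x : E, 0 ≤ x → IsLwcSet (T '' Set.Icc (0 : E) x) := by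
  intro x hx
  have hsing : IsLwcSet (T '' ({x} : Set E)) := hT _ (relWeaklyCompact_singleton x)
  constructor
  · -- boundedness
    apply Bornology.IsBounded.subset (Metric.isBounded_closedBall (x := (0:F)) (r := ‖T x‖))
    rintro _ ⟨a, ⟨ha0, hax⟩, rfl⟩
    have h1 : 0 ≤ T a := hpos a ha0
    have h2 : T a ≤ T x := by
      have := hpos (x - a) (by simpa using hax)
      rw [map_sub] at this
      exact sub_nonneg.mp this
    have : |T a| ≤ |T x| := by
      rw [abs_of_nonneg h1, abs_of_nonneg (h1.trans h2)]; exact h2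
    simpa [Metric.mem_closedBall, dist_zero_right] using HasSolidNorm.solid this
  · intro y hy hdisj
    refine hsing.2 y (fun n => ?_) hdisj
    obtain ⟨b, ⟨a, ⟨ha0, hax⟩, rfl⟩, hb⟩ := hy n
    refine ⟨T x, Set.mem_image_of_mem _ rfl, ?_⟩
    have h1 : 0 ≤ T a := hpos a ha0
    have h2 : T a ≤ T x := by
      have := hpos (x - a) (by simpa using hax)
      rw [map_sub] at this
      exact sub_nonneg.mp this
    refine hb.trans ?_
    rw [abs_of_nonneg h1, abs_of_nonneg (h1.trans h2)]
    exact h2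
end

section
/- If S : E → F is semi-compact and T : F → G is order L-weakly compact (E, F, G Banach lattices), then T∘S is L-weakly compact. -/
open Filter Topology

/-- If S : E → F is semi-compact and T : F → G is order L-weakly compact, then
T ∘ S is L-weakly compact. -/
theorem stmt_18 {E F G : Type*}
    [NormedAddCommGroup E] [Lattice E] [HasSolidNorm E] [IsOrderedAddMonoid E] [NormedSpace ℝ E] [CompleteSpace E]
    [NormedAddCommGroup F] [Lattice F] [HasSolidNorm F] [IsOrderedAddMonoid F] [NormedSpace ℝ F] [CompleteSpace F]
    [NormedAddCommGroup G] [Lattice G] [HasSolidNorm G] [IsOrderedAddMonoid G] [NormedSpace ℝ G] [CompleteSpace G]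
    (S : E →L[ℝ] F) (T : F →L[ℝ] G)
    (hS : IsSemiCompact S) (hT : IsOLwc T) :
    IsLwcSet ((T.comp S) '' Metric.closedBall (0 : E) 1) := by
  constructor
  · exact (T.comp S).lipschitz.isBounded_image Metric.isBounded_closedBall
  · intro x hx hdisj
    rw [NormedAddCommGroup.tendsto_nhds_zero]
    intro ε hε
    choose a ha hxa using hx
    choose e he hea using ha
    set δ : ℝ := ε / (2 * (‖T‖ + 1)) with hδdef
    have hδ : 0 < δ := by positivity
    obtain ⟨u, hu, hw⟩ := hS δ hδ
    choose w hwmem hwnorm using fun n => hw (e n) (he n)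
    set r : ℕ → G := fun n => (T.comp S) (e n) - T (w n) with hr
    have hrnorm : ∀ n, ‖r n‖ ≤ ‖T‖ * δ := by
      intro n
      have : r n = T (S (e n) - w n) := by simp [hr, map_sub]
      rw [this]
      calc ‖T (S (e n) - w n)‖ ≤ ‖T‖ * ‖S (e n) - w n‖ := T.le_opNorm _
        _ ≤ ‖T‖ * δ := by
          exact mul_le_mul_of_nonneg_left (hwnorm n) (norm_nonneg T)
    set z : ℕ → G := fun n => (|x n| - |r n|) ⊔ 0 with hz
    have hz0 : ∀ n, 0 ≤ z n := fun n => le_sup_right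
    have hzlex : ∀ n, z n ≤ |x n| :=
      fun n => sup_le (sub_le_self _ (abs_nonneg _)) (abs_nonneg _)
    have hzle : ∀ n, z n ≤ |T (w n)| := by
      intro n
      refine sup_le ?_ (abs_nonneg _)
      rw [sub_le_iff_le_add]
      have h1 : |x n| ≤ |(T.comp S) (e n)| := by rw [hea n]; exact hxa n
      have h2 : (T.comp S) (e n) = T (w n) + r n := by simp [hr]
      calc |x n| ≤ |(T.comp S) (e n)| := h1
        _ = |T (w n) + r n| := by rw [h2]
        _ ≤ |T (w n)| + |r n| := abs_add_le _ _
    have hzdisj : DisjSeq z := by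
      intro m n hmn
      have h1 : |z m| ⊓ |z n| ≤ |x m| ⊓ |x n| := by
        refine inf_le_inf ?_ ?_ <;>
          rw [abs_of_nonneg (hz0 _)] <;> [exact hzlex m; exact hzlex n]
      have h2 : 0 ≤ |z m| ⊓ |z n| := le_inf (abs_nonneg _) (abs_nonneg _)
      rw [hdisj m n hmn] at h1
      exact le_antisymm h1 h2
    have hzmem : ∀ n, z n ∈ SolidHull (T '' Set.Icc (-u) u) := by
      intro n
      exact ⟨T (w n), ⟨w n, hwmem n, rfl⟩, by
        rw [abs_of_nonneg (hz0 n)]; exact hzle n⟩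
    have tendz : Tendsto (fun n => ‖z n‖) atTop (𝓝 0) :=
      (hT (-u) u).2 z hzmem hzdisj
    have hxbound : ∀ n, ‖x n‖ ≤ ‖z n‖ + ‖r n‖ := by
      intro n
      have key : |x n| = z n + |x n| ⊓ |r n| := by
        have h1 : (|x n| - |r n|) ⊔ (|r n| - |r n|) = (|x n| ⊔ |r n|) - |r n| :=
          (sup_sub _ _ _).symm
        have h2 : |x n| ⊓ |r n| + (|x n| ⊔ |r n|) = |x n| + |r n| := inf_add_sup _ _
        rw [sub_self] at h1
        show |x n| = (|x n| - |r n|) ⊔ 0 + |x n| ⊓ |r n|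
        rw [h1, eq_comm, add_comm, ← add_sub_assoc, h2, add_sub_cancel_right]
      have h3 : ‖|x n| ⊓ |r n|‖ ≤ ‖r n‖ := by
        have habs : |(|x n| ⊓ |r n|)| ≤ |(|r n|)| := by
          rw [abs_of_nonneg (le_inf (abs_nonneg _) (abs_nonneg _)), abs_abs]
          exact inf_le_right
        calc ‖|x n| ⊓ |r n|‖ ≤ ‖|r n|‖ := HasSolidNorm.solid habs
          _ = ‖r n‖ := norm_abs_eq_norm _
      calc ‖x n‖ = ‖|x n|‖ := (norm_abs_eq_norm _).symm
        _ = ‖z n + |x n| ⊓ |r n|‖ := by rw [← key]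
        _ ≤ ‖z n‖ + ‖|x n| ⊓ |r n|‖ := norm_add_le _ _
        _ ≤ ‖z n‖ + ‖r n‖ := by linarith
    have hrhalf : ∀ n, ‖r n‖ < ε / 2 := by
      intro n
      refine lt_of_le_of_lt (hrnorm n) ?_
      rw [hδdef]
      have hlt : ‖T‖ * (ε / (2 * (‖T‖ + 1))) < (‖T‖ + 1) * (ε / (2 * (‖T‖ + 1))) :=
        mul_lt_mul_of_pos_right (by linarith) (by positivity)
      have heq : (‖T‖ + 1) * (ε / (2 * (‖T‖ + 1))) = ε / 2 := by
        have h0 : (‖T‖ + 1) ≠ 0 := by positivity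
        field_simp
      linarith
    have hzev : ∀ᶠ n in atTop, ‖z n‖ < ε / 2 := by
      have := tendz.eventually (eventually_lt_nhds (show (0:ℝ) < ε / 2 by positivity))
      exact this
    filter_upwards [hzev] with n hn
    have : ‖x n‖ < ε := by
      have := hxbound n
      have := hrhalf n
      linarith
    simpa [Real.norm_eq_abs, abs_of_nonneg (norm_nonneg (x n))] using this
end
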